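/- (Global solvability of the bond-price Riccati equation.) Let b, σ : [0,T] → ℝ be continuous with σ > 0. Then there exists a unique continuously differentiable function C(·,T) : [0,T] → ℝ satisfying the Riccati equation ∂C/∂t (t,T) − b(t) C(t,T) − (1/2) σ²(t) C(t,T)² + 1 = 0 with terminal condition C(T,T) = 0, and this solution satisfies 0 ≤ C(t,T) for all t ∈ [0,T]; moreover it is bounded on [0,T]. -/

import Mathlib

open Set

/-- Quadratic Lipschitz estimate used for the Riccati right-hand side. -/
lemma riccati_lip_aux {B S ρ β σ2 x y : ℝ} (hS : 0 ≤ S) (hρ : 0 ≤ ρ)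
    (hβ : |β| ≤ B) (hσ2 : σ2 ≤ S) (hσ0 : 0 ≤ σ2) (hx : |x| ≤ ρ) (hy : |y| ≤ ρ) :
    |(β * x + 1 / 2 * σ2 * x ^ 2 - 1) - (β * y + 1 / 2 * σ2 * y ^ 2 - 1)|
      ≤ (B + S * ρ) * |x - y| := by
  have h : (β * x + 1 / 2 * σ2 * x ^ 2 - 1) - (β * y + 1 / 2 * σ2 * y ^ 2 - 1)
      = (β + 1 / 2 * σ2 * (x + y)) * (x - y) := by ring
  rw [h, abs_mul]
  have h2 : |β + 1 / 2 * σ2 * (x + y)| ≤ B + S * ρ := by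
    calc |β + 1 / 2 * σ2 * (x + y)| ≤ |β| + |1 / 2 * σ2 * (x + y)| := abs_add_le _ _
      _ ≤ B + S * ρ := by
        have h3 : |1 / 2 * σ2 * (x + y)| = 1 / 2 * σ2 * |x + y| := by
          rw [abs_mul, abs_of_nonneg (by positivity)]
        have h4 : |x + y| ≤ 2 * ρ := by
          calc |x + y| ≤ |x| + |y| := abs_add_le _ _
            _ ≤ 2 * ρ := by linarith
        have h5 : 1 / 2 * σ2 * |x + y| ≤ 1 / 2 * S * (2 * ρ) := by
          apply mul_le_mul (by linarith) h4 (abs_nonneg _) (by positivity)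
        nlinarith
  exact mul_le_mul_of_nonneg_right h2 (abs_nonneg _)

set_option maxHeartbeats 2000000 in
/-- Global solvability of the bond-price Riccati equation: with continuous `b` and `σ > 0`
on `[0,T]`, there is a unique continuously differentiable `C(·,T) : [0,T] → ℝ` with
`∂C/∂t − b C − (1/2)σ²C² + 1 = 0` and `C(T,T) = 0`; it satisfies `0 ≤ C` and is bounded
on `[0,T]`. -/
theorem riccati_global_solution (T : ℝ) (hT : 0 < T) (b σ : ℝ → ℝ)
    (hb : ContinuousOn b (Set.Icc 0 T)) (hσ : ContinuousOn σ (Set.Icc 0 T))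
    (hσpos : ∀ s ∈ Set.Icc 0 T, 0 < σ s) :
    ∃ C : ℝ → ℝ,
      ((∀ s ∈ Set.Icc 0 T,
          HasDerivWithinAt C (b s * C s + (1 / 2) * (σ s) ^ 2 * (C s) ^ 2 - 1)
            (Set.Icc 0 T) s) ∧
        C T = 0) ∧
      (∀ s ∈ Set.Icc 0 T, 0 ≤ C s) ∧
      (∃ M : ℝ, ∀ s ∈ Set.Icc 0 T, |C s| ≤ M) ∧
      (∀ C' : ℝ → ℝ,
        ((∀ s ∈ Set.Icc 0 T,
            HasDerivWithinAt C' (b s * C' s + (1 / 2) * (σ s) ^ 2 * (C' s) ^ 2 - 1)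
              (Set.Icc 0 T) s) ∧
          C' T = 0) →
        Set.EqOn C' C (Set.Icc 0 T)) := by
  have h0I : (0 : ℝ) ∈ Icc (0 : ℝ) T := ⟨le_rfl, hT.le⟩
  have hTI : T ∈ Icc (0 : ℝ) T := ⟨hT.le, le_rfl⟩
  -- bounds on the coefficients
  obtain ⟨B, hB⟩ := isCompact_Icc.exists_bound_of_continuousOn hb
  have hB' : ∀ s ∈ Icc (0:ℝ) T, |b s| ≤ B := by simpa [Real.norm_eq_abs] using hB
  have hB0 : 0 ≤ B := le_trans (abs_nonneg _) (hB' 0 h0I)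
  obtain ⟨S0, hS0⟩ := isCompact_Icc.exists_bound_of_continuousOn hσ
  set S : ℝ := S0 ^ 2 with hSdef
  have hS : ∀ s ∈ Icc (0:ℝ) T, σ s ^ 2 ≤ S := by
    intro s hs
    have h1 := hS0 s hs
    rw [Real.norm_eq_abs] at h1
    nlinarith [abs_nonneg (σ s), sq_abs (σ s)]
  have hSnn : 0 ≤ S := sq_nonneg _
  -- positive lower bound on σ
  obtain ⟨s₀, hs₀, hmin⟩ := isCompact_Icc.exists_isMinOn (nonempty_Icc.mpr hT.le) hσ
  set m : ℝ := σ s₀ with hmdef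
  have hm : 0 < m := hσpos s₀ hs₀
  have hmle : ∀ s ∈ Icc (0:ℝ) T, m ≤ σ s := fun s hs => hmin hs
  -- constants
  set δ : ℝ := min 1 (1 / (2 * (B + S + 1))) with hδdef
  have hδ0 : 0 < δ := lt_min one_pos (by positivity)
  have hδ1 : δ ≤ 1 := min_le_left _ _
  have hδ2 : δ * (B + S) ≤ 1 / 2 := by
    have h1 : δ ≤ 1 / (2 * (B + S + 1)) := min_le_right _ _
    have h2 : (0:ℝ) < 2 * (B + S + 1) := by positivity
    rw [le_div_iff₀ h2] at h1
    nlinarith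
  set M : ℝ := max 2 (2 * (1 + B) / m ^ 2) with hMdef
  have hM2 : (2:ℝ) ≤ M := le_max_left _ _
  have hM0 : (0:ℝ) ≤ M := by linarith
  have hMm : 1 + B ≤ 1 / 2 * m ^ 2 * M := by
    have h1 : 2 * (1 + B) / m ^ 2 ≤ M := le_max_right _ _
    rw [div_le_iff₀ (by positivity)] at h1
    nlinarith
  have hδM : -δ ≤ M := by linarith
  -- the truncated vector field
  set p : ℝ → ℝ := fun x => max (-δ) (min x M) with hpdef
  have hp_mem : ∀ x, -δ ≤ p x ∧ p x ≤ M := fun x =>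
    ⟨le_max_left _ _, max_le hδM (min_le_right _ _)⟩
  have hp_abs : ∀ x, |p x| ≤ M := by
    intro x
    rw [abs_le]
    exact ⟨by linarith [(hp_mem x).1], (hp_mem x).2⟩
  have hp_lip : ∀ x y, |p x - p y| ≤ |x - y| := by
    intro x y
    have h1 : |p x - p y| ≤ max |(-δ) - (-δ)| |min x M - min y M| :=
      abs_max_sub_max_le_max _ _ _ _
    have h2 : |min x M - min y M| ≤ max |x - y| |M - M| := abs_min_sub_min_le_max _ _ _ _
    simp only [sub_self, abs_zero] at h1 h2
    calc |p x - p y| ≤ max 0 |min x M - min y M| := h1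
      _ = |min x M - min y M| := max_eq_right (abs_nonneg _)
      _ ≤ max |x - y| 0 := h2
      _ = |x - y| := max_eq_left (abs_nonneg _)
  set v : ℝ → ℝ → ℝ := fun t x => b t * p x + 1 / 2 * σ t ^ 2 * (p x) ^ 2 - 1 with hvdef
  set Cb : ℝ := B * M + 1 / 2 * S * M ^ 2 + 1 with hCbdef
  have hCb0 : 0 ≤ Cb := by positivity
  have hvbound : ∀ t ∈ Icc (0:ℝ) T, ∀ x : ℝ, |v t x| ≤ Cb := by
    intro t ht x
    have h1 : |b t * p x| ≤ B * M := by
      rw [abs_mul]; exact mul_le_mul (hB' t ht) (hp_abs x) (abs_nonneg _) hB0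
    have h2 : |1 / 2 * σ t ^ 2 * (p x) ^ 2| ≤ 1 / 2 * S * M ^ 2 := by
      rw [abs_of_nonneg (by positivity)]
      have hσt := hS t ht
      have hp2 : (p x) ^ 2 ≤ M ^ 2 := by
        nlinarith [hp_abs x, abs_nonneg (p x), sq_abs (p x)]
      nlinarith [sq_nonneg (p x)]
    have heq : v t x = (b t * p x) + (1 / 2 * σ t ^ 2 * (p x) ^ 2) + (-1) := by
      simp only [hvdef]; ring
    rw [heq]
    calc |(b t * p x) + (1 / 2 * σ t ^ 2 * (p x) ^ 2) + (-1)|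
        ≤ |(b t * p x) + (1 / 2 * σ t ^ 2 * (p x) ^ 2)| + |(-1:ℝ)| := abs_add_le _ _
      _ ≤ (|b t * p x| + |1 / 2 * σ t ^ 2 * (p x) ^ 2|) + 1 := by
          simp only [abs_neg, abs_one]
          exact add_le_add_left (abs_add_le _ _) 1
      _ ≤ Cb := by rw [hCbdef]; linarith
  -- The Picard–Lindelöf data
  have hpl : IsPicardLindelof v (tmin := 0) (tmax := T) ⟨T, hTI⟩ (0:ℝ) ((Cb * T).toNNReal) 0
      Cb.toNNReal ((B + S * M).toNNReal) := by
    constructor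
    · intro t ht
      apply LipschitzWith.lipschitzOnWith
      apply LipschitzWith.of_dist_le_mul
      intro x y
      rw [Real.dist_eq, Real.dist_eq, Real.coe_toNNReal _ (by positivity)]
      calc |v t x - v t y| ≤ (B + S * M) * |p x - p y| := by
            simp only [hvdef]
            exact riccati_lip_aux hSnn hM0 (hB' t ht) (hS t ht) (sq_nonneg _)
              (hp_abs x) (hp_abs y)
        _ ≤ (B + S * M) * |x - y| :=
            mul_le_mul_of_nonneg_left (hp_lip x y) (by positivity)
    · intro x _
      simp only [hvdef]
      exact ((hb.mul continuousOn_const).add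
        ((continuousOn_const.mul (hσ.pow 2)).mul continuousOn_const)).sub continuousOn_const
    · intro t ht x _
      rw [Real.norm_eq_abs, Real.coe_toNNReal _ hCb0]; exact hvbound t ht x
    · show (Cb.toNNReal : ℝ) * max (T - T) (T - 0) ≤ ((Cb * T).toNNReal : ℝ) - ((0 : NNReal) : ℝ)
      rw [sub_self, sub_zero, max_eq_right hT.le, NNReal.coe_zero, sub_zero,
        Real.coe_toNNReal _ hCb0, Real.coe_toNNReal _ (by positivity)]
  obtain ⟨C, hCT, hCd⟩ := hpl.exists_eq_forall_mem_Icc_hasDerivWithinAt₀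
  replace hCT : C T = 0 := hCT
  have hCc : ContinuousOn C (Icc 0 T) := fun t ht => (hCd t ht).continuousWithinAt
  have hCda : ∀ x ∈ Ioo (0:ℝ) T, HasDerivAt C (v x (C x)) x := fun x hx =>
    (hCd x (Ioo_subset_Icc_self hx)).hasDerivAt (Icc_mem_nhds hx.1 hx.2)
  -- upper bound
  have hCM : ∀ s ∈ Icc (0:ℝ) T, C s ≤ M := by
    by_contra hcon
    push_neg at hcon
    obtain ⟨t₁, ht₁, hgt⟩ := hcon
    set A : Set ℝ := Icc t₁ T ∩ C ⁻¹' (Iic M) with hAdef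
    have hAne : A.Nonempty := ⟨T, ⟨ht₁.2, le_rfl⟩, by
      simp only [mem_preimage, mem_Iic, hCT]; linarith⟩
    have hAbdd : BddBelow A := ⟨t₁, fun x hx => hx.1.1⟩
    have hAcl : IsClosed A :=
      (hCc.mono (Icc_subset_Icc ht₁.1 le_rfl)).preimage_isClosed_of_isClosed
        isClosed_Icc isClosed_Iic
    set u := sInf A with hudef
    have huA : u ∈ A := hAcl.csInf_mem hAne hAbdd
    have hCu : C u ≤ M := huA.2
    have ht₁le : t₁ ≤ u := le_csInf hAne fun x hx => hx.1.1
    have ht₁u : t₁ < u := ht₁le.lt_of_ne (fun h => by rw [← h] at hCu; linarith)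
    have hnot : ∀ s, t₁ ≤ s → s < u → M < C s := by
      intro s hs1 hs2
      by_contra hle
      push_neg at hle
      have hsA : s ∈ A := ⟨⟨hs1, hs2.le.trans huA.1.2⟩, hle⟩
      exact absurd (csInf_le hAbdd hsA) (not_le.mpr hs2)
    have hmono : StrictMonoOn C (Icc t₁ u) := by
      apply strictMonoOn_of_deriv_pos (convex_Icc _ _)
        (hCc.mono (Icc_subset_Icc ht₁.1 huA.1.2))
      intro x hx
      rw [interior_Icc] at hx
      have hxIoo : x ∈ Ioo (0:ℝ) T := ⟨lt_of_le_of_lt ht₁.1 hx.1, lt_of_lt_of_le hx.2 huA.1.2⟩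
      have hxI : x ∈ Icc (0:ℝ) T := Ioo_subset_Icc_self hxIoo
      rw [(hCda x hxIoo).deriv]
      have hMC : M ≤ C x := (hnot x hx.1.le hx.2).le
      have hpC : p (C x) = M := by
        simp only [hpdef]
        rw [min_eq_right hMC, max_eq_right hδM]
      show 0 < v x (C x)
      simp only [hvdef]
      rw [hpC]
      have h1 : m ^ 2 ≤ σ x ^ 2 := by nlinarith [hmle x hxI, hm]
      have h2 : -(B * M) ≤ b x * M := by nlinarith [abs_le.mp (hB' x hxI)]
      have h3 : m ^ 2 * M ^ 2 ≤ σ x ^ 2 * M ^ 2 := mul_le_mul_of_nonneg_right h1 (sq_nonneg M)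
      have h4 : (1 + B) * M ≤ 1 / 2 * m ^ 2 * M ^ 2 := by nlinarith [hMm, hM0]
      nlinarith
    have : C t₁ < C u := hmono (left_mem_Icc.mpr ht₁u.le) (right_mem_Icc.mpr ht₁u.le) ht₁u
    linarith
  -- key descent lemma
  have hkey : ∀ a, a ∈ Icc (0:ℝ) T → C a < 0 → (∀ s, a < s → s ≤ T → -δ < C s) → False := by
    intro a ha hCa hlow
    set A' : Set ℝ := Icc a T ∩ C ⁻¹' (Ici 0) with hA'def
    have hA'ne : A'.Nonempty := ⟨T, ⟨ha.2, le_rfl⟩, by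
      simp only [mem_preimage, mem_Ici, hCT]; exact le_rfl⟩
    have hA'bdd : BddBelow A' := ⟨a, fun x hx => hx.1.1⟩
    have hA'cl : IsClosed A' :=
      (hCc.mono (Icc_subset_Icc ha.1 le_rfl)).preimage_isClosed_of_isClosed
        isClosed_Icc isClosed_Ici
    set u := sInf A' with hu
    have huA : u ∈ A' := hA'cl.csInf_mem hA'ne hA'bdd
    have hCu : (0:ℝ) ≤ C u := huA.2
    have haule : a ≤ u := le_csInf hA'ne fun x hx => hx.1.1
    have hau : a < u := haule.lt_of_ne (fun h => by rw [← h] at hCu; linarith)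
    have hnot : ∀ s, a ≤ s → s < u → C s < 0 := by
      intro s hs1 hs2
      by_contra hle
      push_neg at hle
      exact absurd (csInf_le hA'bdd ⟨⟨hs1, hs2.le.trans huA.1.2⟩, hle⟩) (not_le.mpr hs2)
    have hanti : StrictAntiOn C (Icc a u) := by
      apply strictAntiOn_of_deriv_neg (convex_Icc _ _)
        (hCc.mono (Icc_subset_Icc ha.1 huA.1.2))
      intro x hx
      rw [interior_Icc] at hx
      have hxIoo : x ∈ Ioo (0:ℝ) T := ⟨lt_of_le_of_lt ha.1 hx.1, lt_of_lt_of_le hx.2 huA.1.2⟩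
      have hxI : x ∈ Icc (0:ℝ) T := Ioo_subset_Icc_self hxIoo
      rw [(hCda x hxIoo).deriv]
      have hneg : C x < 0 := hnot x hx.1.le hx.2
      have hlow' : -δ < C x := hlow x hx.1 hxI.2
      have hpC : p (C x) = C x := by
        simp only [hpdef]
        rw [min_eq_left (by linarith : C x ≤ M), max_eq_right (by linarith : -δ ≤ C x)]
      show v x (C x) < 0
      simp only [hvdef]
      rw [hpC]
      have habs : |C x| ≤ δ := abs_le.mpr ⟨by linarith, by linarith⟩
      have h1 : b x * C x ≤ B * δ := by
        calc b x * C x ≤ |b x * C x| := le_abs_self _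
          _ = |b x| * |C x| := abs_mul _ _
          _ ≤ B * δ := mul_le_mul (hB' x hxI) habs (abs_nonneg _) hB0
      have h2 : 1 / 2 * σ x ^ 2 * C x ^ 2 ≤ 1 / 2 * S * δ ^ 2 := by
        have hc2 : C x ^ 2 ≤ δ ^ 2 := by nlinarith [abs_le.mp habs]
        nlinarith [hS x hxI, sq_nonneg (C x), hSnn, sq_nonneg δ]
      have h3 : δ ^ 2 ≤ δ := by nlinarith
      have h4 : S * δ ^ 2 ≤ S * δ := mul_le_mul_of_nonneg_left h3 hSnn
      nlinarith [hδ2]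
    have h5 : C u < C a := hanti (left_mem_Icc.mpr hau.le) (right_mem_Icc.mpr hau.le) hau
    linarith
  -- lower bound by -δ
  have hlowδ : ∀ s ∈ Icc (0:ℝ) T, -δ < C s := by
    by_contra hcon
    push_neg at hcon
    obtain ⟨t₀, ht₀, hle⟩ := hcon
    set A : Set ℝ := Icc 0 T ∩ C ⁻¹' (Iic (-δ)) with hA
    have hAne : A.Nonempty := ⟨t₀, ht₀, hle⟩
    have hbdd : BddAbove A := ⟨T, fun x hx => hx.1.2⟩
    have hAcl : IsClosed A := hCc.preimage_isClosed_of_isClosed isClosed_Icc isClosed_Iic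
    set w := sSup A with hw
    have hwA : w ∈ A := hAcl.csSup_mem hAne hbdd
    have hCw : C w < 0 := lt_of_le_of_lt hwA.2 (by linarith)
    apply hkey w hwA.1 hCw
    intro s hws hsT
    by_contra hc
    push_neg at hc
    have hsA : s ∈ A := ⟨⟨hwA.1.1.trans hws.le, hsT⟩, hc⟩
    exact absurd (le_csSup hbdd hsA) (not_le.mpr hws)
  -- nonnegativity
  have hC0le : ∀ s ∈ Icc (0:ℝ) T, 0 ≤ C s := by
    intro s hs
    by_contra hneg
    push_neg at hneg
    exact hkey s hs hneg (fun r hr hrT => hlowδ r ⟨hs.1.trans hr.le, hrT⟩)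
  -- C solves the original equation
  have hCfix : ∀ s ∈ Icc (0:ℝ) T, p (C s) = C s := by
    intro s hs
    simp only [hpdef]
    rw [min_eq_left (hCM s hs), max_eq_right (by linarith [hC0le s hs, hδ0.le] : -δ ≤ C s)]
  have hCde : ∀ s ∈ Icc (0:ℝ) T,
      HasDerivWithinAt C (b s * C s + 1 / 2 * σ s ^ 2 * C s ^ 2 - 1) (Icc 0 T) s := by
    intro s hs
    have h1 := hCd s hs
    simp only [hvdef] at h1
    rwa [hCfix s hs] at h1
  refine ⟨C, ⟨hCde, hCT⟩, hC0le,
    ⟨M, fun s hs => abs_le.mpr ⟨by linarith [hC0le s hs], hCM s hs⟩⟩, ?_⟩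
  -- uniqueness
  rintro C' ⟨hC'd, hC'T⟩
  have hC'c : ContinuousOn C' (Icc 0 T) := fun t ht => (hC'd t ht).continuousWithinAt
  obtain ⟨M', hM'⟩ := isCompact_Icc.exists_bound_of_continuousOn hC'c
  have hM'' : ∀ s ∈ Icc (0:ℝ) T, |C' s| ≤ M' := by simpa [Real.norm_eq_abs] using hM'
  set ρ : ℝ := max M M' with hρdef
  have hρ0 : 0 ≤ ρ := hM0.trans (le_max_left _ _)
  set tc : ℝ → ℝ := fun t => max 0 (min t T) with htcdef
  have htc : ∀ t, tc t ∈ Icc (0:ℝ) T := fun t =>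
    ⟨le_max_left _ _, max_le hT.le (min_le_right _ _)⟩
  have htc_eq : ∀ t ∈ Icc (0:ℝ) T, tc t = t := by
    intro t ht
    simp only [htcdef]
    rw [min_eq_left ht.2, max_eq_right ht.1]
  set w : ℝ → ℝ → ℝ := fun t x => b (tc t) * x + 1 / 2 * σ (tc t) ^ 2 * x ^ 2 - 1 with hwdef
  have hlip : ∀ t, LipschitzOnWith (B + S * ρ).toNNReal (w t) (Metric.closedBall (0:ℝ) ρ) := by
    intro t
    apply LipschitzOnWith.of_dist_le_mul
    intro x hx y hy
    rw [Real.dist_eq, Real.dist_eq, Real.coe_toNNReal _ (by positivity)]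
    have hx' : |x| ≤ ρ := by
      have := Metric.mem_closedBall.mp hx
      rwa [Real.dist_eq, sub_zero] at this
    have hy' : |y| ≤ ρ := by
      have := Metric.mem_closedBall.mp hy
      rwa [Real.dist_eq, sub_zero] at this
    simp only [hwdef]
    exact riccati_lip_aux hSnn hρ0 (hB' _ (htc t)) (hS _ (htc t)) (sq_nonneg _) hx' hy'
  have hderiv' : ∀ f : ℝ → ℝ,
      (∀ s ∈ Icc (0:ℝ) T,
        HasDerivWithinAt f (b s * f s + 1 / 2 * σ s ^ 2 * f s ^ 2 - 1) (Icc 0 T) s) →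
      ∀ t ∈ Ioc (0:ℝ) T, HasDerivWithinAt f (w t (f t)) (Iic t) t := by
    intro f hf t ht
    have htI : t ∈ Icc (0:ℝ) T := ⟨ht.1.le, ht.2⟩
    have h1 := hf t htI
    have h2 : Icc (0:ℝ) T ∈ nhdsWithin t (Iic t) := by
      rw [mem_nhdsWithin]
      exact ⟨Ioi 0, isOpen_Ioi, ht.1, fun x hx => ⟨hx.1.le, hx.2.trans ht.2⟩⟩
    have h3 := h1.mono_of_mem_nhdsWithin h2
    have hw : w t (f t) = b t * f t + 1 / 2 * σ t ^ 2 * f t ^ 2 - 1 := by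
      simp only [hwdef]
      rw [htc_eq t htI]
    rwa [hw]
  exact ODE_solution_unique_of_mem_Icc_left (fun t _ => hlip t)
    hC'c (hderiv' C' hC'd)
    (fun t ht => Metric.mem_closedBall.mpr (by
      rw [Real.dist_eq, sub_zero]
      exact (hM'' t ⟨ht.1.le, ht.2⟩).trans (le_max_right _ _)))
    hCc (hderiv' C hCde)
    (fun t ht => Metric.mem_closedBall.mpr (by
      rw [Real.dist_eq, sub_zero]
      exact (abs_le.mpr ⟨by linarith [hC0le t ⟨ht.1.le, ht.2⟩],
        hCM t ⟨ht.1.le, ht.2⟩⟩).trans (le_max_left _ _)))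
    (by rw [hC'T, hCT])
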